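/- Fix ℓ_1 > ... > ℓ_n > 0, ℓ_j = 0 for j > n, and p ≥ n. The function ℒ'(λ) = -n∑_{i=1}^p ln λ_i - ∑_{a=1}^n ℓ_a/λ_a - (1/p)∑_{1≤a<b≤n} ((λ_a-λ_b)/(λ_aλ_b))(ℓ_a-ℓ_b) - (1/p)∑_{1≤a≤n<r≤p} ((λ_a-λ_r)/(λ_aλ_r))ℓ_a on ℝ₊₊^p has a critical point at the constant vector λ_i = (∑_{a=1}^n ℓ_a)/(np) for all i. -/

import Mathlib

/-- The linearized adjusted log-likelihood `ℒ'` has a critical point at the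
constant vector `λ_i = (∑ ℓ_a)/(np)`. -/
theorem stmt_9 (n p : ℕ) (hn : 1 ≤ n) (hnp : n ≤ p) (ℓ : ℕ → ℝ)
    (hpos : ∀ a < n, 0 < ℓ a)
    (hdec : ∀ a b, a < b → b < n → ℓ b < ℓ a)
    (ℓ' : Fin p → ℝ) (hℓ' : ∀ i : Fin p, ℓ' i = if (i : ℕ) < n then ℓ i else 0)
    (f : (Fin p → ℝ) → ℝ)
    (hf : ∀ v : Fin p → ℝ, f v =
      -(n : ℝ) * ∑ i, Real.log (v i) - ∑ i, ℓ' i / v i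
        - (1 / p) * ∑ i : Fin p, ∑ j : Fin p,
            if (i : ℕ) < (j : ℕ) then ((v i - v j) / (v i * v j)) * (ℓ' i - ℓ' j) else 0) :
    fderiv ℝ f (fun _ => (∑ a ∈ Finset.range n, ℓ a) / (n * p)) = 0 := by
  have hp0 : 0 < p := lt_of_lt_of_le hn hnp
  set S : ℝ := ∑ a ∈ Finset.range n, ℓ a with hSdef
  have hSpos : 0 < S :=
    Finset.sum_pos (fun a ha => hpos a (Finset.mem_range.mp ha))
      ⟨0, Finset.mem_range.mpr hn⟩
  set c : ℝ := S / (n * p) with hcdef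
  have hn0 : (0:ℝ) < n := by exact_mod_cast hn
  have hp0' : (0:ℝ) < p := by exact_mod_cast hp0
  have hc : 0 < c := div_pos hSpos (by positivity)
  -- the total mass of ℓ'
  have hsumℓ' : ∑ i : Fin p, ℓ' i = S := by
    have h1 : ∑ i : Fin p, ℓ' i = ∑ i ∈ Finset.range p, (if i < n then ℓ i else 0) := by
      rw [← Fin.sum_univ_eq_sum_range (fun i => if i < n then ℓ i else 0) p]
      exact Finset.sum_congr rfl fun i _ => hℓ' i
    rw [h1, hSdef]
    rw [← Finset.sum_subset (Finset.range_subset_range.mpr hnp)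
      (fun x _ hx => if_neg (by simpa using hx))]
    exact Finset.sum_congr rfl fun i hi => if_pos (Finset.mem_range.mp hi)
  -- the simplified separable function
  set g : (Fin p → ℝ) → ℝ := fun v => ∑ i, (-(n:ℝ) * Real.log (v i) - (S/p) * (v i)⁻¹)
    with hgdef
  -- f agrees with g on vectors with nonzero coordinates
  have key : ∀ v : Fin p → ℝ, (∀ i, v i ≠ 0) → f v = g v := by
    intro v hv
    set F : Fin p → Fin p → ℝ :=
      fun i j => ((v i - v j) / (v i * v j)) * (ℓ' i - ℓ' j) with hFdef
    have hsym : ∀ i j, F j i = F i j := by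
      intro i j; simp only [hFdef]; ring
    have hdiag : ∀ i, F i i = 0 := by intro i; simp [hFdef]
    set T : ℝ := ∑ i, (v i)⁻¹ with hTdef
    set D : ℝ := ∑ i, ℓ' i * (v i)⁻¹ with hDdef
    have expand : ∀ i j, F i j =
        ℓ' i * (v j)⁻¹ + ℓ' j * (v i)⁻¹ - ℓ' i * (v i)⁻¹ - ℓ' j * (v j)⁻¹ := by
      intro i j
      have h1 : (v i - v j) / (v i * v j) = (v j)⁻¹ - (v i)⁻¹ := by
        field_simp [hv i, hv j]
      simp only [hFdef, h1]
      ring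
    have hfull : ∑ i : Fin p, ∑ j : Fin p, F i j = 2 * (S * T - (p:ℝ) * D) := by
      have hinner : ∀ i : Fin p, ∑ j : Fin p, F i j =
          ℓ' i * T + S * (v i)⁻¹ - (p:ℝ) * (ℓ' i * (v i)⁻¹) - D := by
        intro i
        calc ∑ j : Fin p, F i j
            = ∑ j : Fin p, (ℓ' i * (v j)⁻¹ + ℓ' j * (v i)⁻¹ - ℓ' i * (v i)⁻¹ - ℓ' j * (v j)⁻¹) :=
              Finset.sum_congr rfl fun j _ => expand i j
          _ = ℓ' i * T + S * (v i)⁻¹ - (p:ℝ) * (ℓ' i * (v i)⁻¹) - D := by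
              simp only [Finset.sum_add_distrib, Finset.sum_sub_distrib,
                ← Finset.mul_sum, ← Finset.sum_mul, Finset.sum_const,
                Finset.card_univ, Fintype.card_fin, nsmul_eq_mul, hTdef, hDdef, hsumℓ']
              ring
      calc ∑ i : Fin p, ∑ j : Fin p, F i j
          = ∑ i : Fin p, (ℓ' i * T + S * (v i)⁻¹ - (p:ℝ) * (ℓ' i * (v i)⁻¹) - D) :=
            Finset.sum_congr rfl fun i _ => hinner i
        _ = 2 * (S * T - (p:ℝ) * D) := by
            simp only [Finset.sum_add_distrib, Finset.sum_sub_distrib,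
              ← Finset.mul_sum, ← Finset.sum_mul, Finset.sum_const,
              Finset.card_univ, Fintype.card_fin, nsmul_eq_mul, hTdef, hDdef, hsumℓ']
            ring
    have hswap : (∑ i : Fin p, ∑ j : Fin p, (if (j:ℕ) < (i:ℕ) then F i j else 0))
        = ∑ i : Fin p, ∑ j : Fin p, (if (i:ℕ) < (j:ℕ) then F i j else 0) := by
      rw [Finset.sum_comm]
      exact Finset.sum_congr rfl fun i _ => Finset.sum_congr rfl fun j _ => by
        rw [hsym]
    have tri : ∀ i j : Fin p,
        (if (i:ℕ) < (j:ℕ) then F i j else 0) + (if (j:ℕ) < (i:ℕ) then F i j else 0)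
          = F i j := by
      intro i j
      rcases lt_trichotomy (i:ℕ) (j:ℕ) with h | h | h
      · rw [if_pos h, if_neg (Nat.lt_asymm h), add_zero]
      · have hij : i = j := Fin.ext h
        subst hij
        simp [hdiag]
      · rw [if_neg (Nat.lt_asymm h), if_pos h, zero_add]
    have hhalf : (∑ i : Fin p, ∑ j : Fin p, (if (i:ℕ) < (j:ℕ) then F i j else 0)) * 2
        = ∑ i : Fin p, ∑ j : Fin p, F i j := by
      calc (∑ i : Fin p, ∑ j : Fin p, (if (i:ℕ) < (j:ℕ) then F i j else 0)) * 2
          = (∑ i : Fin p, ∑ j : Fin p, (if (i:ℕ) < (j:ℕ) then F i j else 0))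
            + ∑ i : Fin p, ∑ j : Fin p, (if (j:ℕ) < (i:ℕ) then F i j else 0) := by
            rw [hswap]; ring
        _ = ∑ i : Fin p, ∑ j : Fin p,
              ((if (i:ℕ) < (j:ℕ) then F i j else 0) + (if (j:ℕ) < (i:ℕ) then F i j else 0)) := by
            rw [← Finset.sum_add_distrib]
            exact Finset.sum_congr rfl fun i _ => (Finset.sum_add_distrib).symm
        _ = ∑ i : Fin p, ∑ j : Fin p, F i j :=
            Finset.sum_congr rfl fun i _ => Finset.sum_congr rfl fun j _ => tri i j
    have hA : (∑ i : Fin p, ∑ j : Fin p, (if (i:ℕ) < (j:ℕ) then F i j else 0))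
        = S * T - (p:ℝ) * D := by
      have h := hhalf
      rw [hfull] at h
      linarith
    rw [hf, hgdef]
    have hDiv : ∀ i : Fin p, ℓ' i / v i = ℓ' i * (v i)⁻¹ := fun i => div_eq_mul_inv _ _
    calc -(n : ℝ) * ∑ i, Real.log (v i) - ∑ i, ℓ' i / v i
        - (1 / p) * ∑ i : Fin p, ∑ j : Fin p,
            (if (i : ℕ) < (j : ℕ) then ((v i - v j) / (v i * v j)) * (ℓ' i - ℓ' j) else 0)
        = -(n : ℝ) * ∑ i, Real.log (v i) - D - (1/p) * (S * T - (p:ℝ) * D) := by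
          rw [← hA]
          simp only [hDdef, hDiv, hFdef]
      _ = -(n : ℝ) * ∑ i, Real.log (v i) - (S/p) * T := by
          field_simp
          ring
      _ = ∑ i, (-(n:ℝ) * Real.log (v i) - (S/p) * (v i)⁻¹) := by
          simp only [Finset.sum_sub_distrib, ← Finset.mul_sum, hTdef]
  -- f = g near the constant vector
  have hev : f =ᶠ[nhds (fun _ : Fin p => c)] g := by
    have hmem : ∀ᶠ v : Fin p → ℝ in nhds (fun _ => c), ∀ i, v i ≠ 0 :=
      Filter.eventually_all.mpr fun i =>
        (continuous_apply i).continuousAt.eventually_ne hc.ne'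
    exact hmem.mono fun v hv => key v hv
  rw [hev.fderiv_eq]
  -- the derivative of g at the constant vector vanishes
  have hh : HasDerivAt (fun t : ℝ => -(n:ℝ) * Real.log t - (S/p) * t⁻¹) 0 c := by
    have h1 : HasDerivAt Real.log c⁻¹ c := Real.hasDerivAt_log hc.ne'
    have h2 : HasDerivAt (fun t : ℝ => t⁻¹) (-(c^2)⁻¹) c := hasDerivAt_inv hc.ne'
    have h3 := (h1.const_mul (-(n:ℝ))).sub (h2.const_mul (S/p))
    refine h3.congr_deriv ?_
    rw [hcdef]
    field_simp
    ring
  have hcoord : ∀ i : Fin p, HasFDerivAt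
      (fun v : Fin p → ℝ => -(n:ℝ) * Real.log (v i) - (S/p) * (v i)⁻¹)
      (0 : (Fin p → ℝ) →L[ℝ] ℝ) (fun _ => c) := by
    intro i
    have hproj : HasFDerivAt (fun v : Fin p → ℝ => v i)
        (ContinuousLinearMap.proj (R := ℝ) (φ := fun _ : Fin p => ℝ) i) (fun _ => c) :=
      (ContinuousLinearMap.proj (R := ℝ) (φ := fun _ : Fin p => ℝ) i).hasFDerivAt
    have h := hh.comp_hasFDerivAt (fun _ => c) hproj
    rw [zero_smul] at h
    exact h
  have hg0 : HasFDerivAt g (0 : (Fin p → ℝ) →L[ℝ] ℝ) (fun _ : Fin p => c) := by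
    have h : HasFDerivAt g
        (∑ _i : Fin p, (0 : (Fin p → ℝ) →L[ℝ] ℝ)) (fun _ : Fin p => c) :=
      HasFDerivAt.fun_sum (fun i _ => hcoord i)
    rw [Finset.sum_const_zero] at h
    exact h
  exact hg0.fderiv
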